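/- Suppose (∑_{i=1}^N β_i)·(max_{i,t} r_i(t)) < (min_{i,t} c_i(t))·D_min (so that K_s is well defined) and 1 ≤ K_s ≤ K_c. Set ε = D_min and η = ln(1 + N·D_max/ε). Let s̃ be the online schedule: s̃_i(0) = 0 and, for each t = 1,…,T, the vector (s̃_i(t))_{i=1}^N minimizes ∑_{i=1}^N c_i(t)·x_i + (1/η)·∑_{i=1}^N β_i[(x_i + ε/N)·ln((x_i + ε/N)/(s̃_i(t−1) + ε/N)) − x_i] over {x : x_i ≥ 0 for all i, ∑_i x_i ≥ D(t)}, and assume the online schedule meets demand with equality, ∑_{i=1}^N s̃_i(t) = D(t) for every t. Then for every feasible schedule s, the total cost of s̃ is at most K_s·(1 + 2·ln(1 + N·D_max/D_min)) times the total cost of s. -/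

import Mathlib

set_option maxHeartbeats 1000000

theorem lem_H1 {xe b δ : ℝ} (hx : 0 < xe) (hb : 0 < b) (hδ : 0 ≤ δ) :
    (xe + δ) * Real.log ((xe + δ) / b) - xe * Real.log (xe / b) - δ
      ≤ δ * Real.log ((xe + δ) / b) := by
  have key : xe * Real.log ((xe + δ) / xe) ≤ δ := by
    have h := Real.log_le_sub_one_of_pos (x := (xe + δ) / xe) (by positivity)
    have : (xe + δ) / xe - 1 = δ / xe := by field_simp; ring
    rw [this] at h
    calc xe * Real.log ((xe + δ) / xe) ≤ xe * (δ / xe) := by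
          exact mul_le_mul_of_nonneg_left h hx.le
      _ = δ := by field_simp
  have hsplit : Real.log ((xe + δ) / b) = Real.log (xe / b) + Real.log ((xe + δ) / xe) := by
    rw [← Real.log_mul (by positivity) (by positivity)]
    congr 1; field_simp
  nlinarith [hsplit]

theorem lem_H2 {xe b δ : ℝ} (hb : 0 < b) (hδ : 0 ≤ δ) (hxd : 0 < xe - δ) :
    (xe - δ) * Real.log ((xe - δ) / b) - xe * Real.log (xe / b) + δ
      ≤ -(δ * Real.log ((xe - δ) / b)) := by
  have hx : 0 < xe := by linarith
  have key : δ ≤ xe * Real.log (xe / (xe - δ)) := by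
    have h := Real.log_le_sub_one_of_pos (x := (xe - δ) / xe) (by positivity)
    have h2 : Real.log (xe / (xe - δ)) = - Real.log ((xe - δ) / xe) := by
      rw [← Real.log_inv]; congr 1; field_simp
    have h3 : xe * Real.log ((xe - δ) / xe) ≤ xe * ((xe - δ) / xe - 1) :=
      mul_le_mul_of_nonneg_left h hx.le
    have h4 : xe * ((xe - δ) / xe - 1) = -δ := by field_simp; ring
    rw [h2]; nlinarith
  have hsplit : Real.log (xe / b) = Real.log ((xe - δ) / b) + Real.log (xe / (xe - δ)) := by
    rw [← Real.log_mul (by positivity) (by positivity)]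
    congr 1; field_simp
  nlinarith [hsplit]

theorem lem_sum_update {N : ℕ} (G : Fin N → ℝ → ℝ) (a : Fin N → ℝ) (j : Fin N) (v : ℝ) :
    ∑ i, G i (Function.update a j v i) = (∑ i, G i (a i)) + (G j v - G j (a j)) := by
  have h : (fun i => G i (Function.update a j v i))
      = Function.update (fun i => G i (a i)) j (G j v) := by
    funext i
    by_cases hij : i = j
    · subst hij; simp
    · simp [Function.update_of_ne hij]
  rw [h, Finset.sum_update_of_mem (Finset.mem_univ j)]
  rw [Finset.sum_eq_sum_sdiff_singleton_add (Finset.mem_univ j) (fun i => G i (a i))]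
  ring

theorem kkt_nonneg {N : ℕ} (c b a β : Fin N → ℝ) (η e Dt : ℝ)
    (hηpos : 0 < η) (he : 0 < e) (hβn : ∀ i, 0 ≤ β i)
    (han : ∀ i, 0 ≤ a i) (hbn : ∀ i, 0 ≤ b i)
    (hfeas : Dt ≤ ∑ i, a i)
    (hmin : ∀ x : Fin N → ℝ, (∀ i, 0 ≤ x i) → Dt ≤ ∑ i, x i →
      (∑ i, c i * a i) + (1/η) * ∑ i, β i *
          ((a i + e) * Real.log ((a i + e) / (b i + e)) - a i)
      ≤ (∑ i, c i * x i) + (1/η) * ∑ i, β i *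
          ((x i + e) * Real.log ((x i + e) / (b i + e)) - x i))
    (j : Fin N) :
    0 ≤ c j + β j / η * Real.log ((a j + e) / (b j + e)) := by
  by_contra hneg
  push_neg at hneg
  have haj : 0 < a j + e := by have := han j; linarith
  have hbj : 0 < b j + e := by have := hbn j; linarith
  set G : ℝ := c j + β j / η * Real.log ((a j + e) / (b j + e)) with hGdef
  set B0 : ℝ := max (β j) 1 with hB0def
  have hB0pos : (0:ℝ) < B0 := lt_of_lt_of_le one_pos (le_max_right _ _)
  have hβB : β j ≤ B0 := le_max_left _ _
  set ss : ℝ := η * (-G) / (2 * B0) with hssdef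
  have hsspos : 0 < ss := by
    rw [hssdef]
    exact div_pos (mul_pos hηpos (by linarith)) (by linarith)
  have hexp : 1 < Real.exp ss := by
    rw [← Real.exp_zero]
    exact Real.exp_lt_exp.mpr hsspos
  set δ : ℝ := (a j + e) * (Real.exp ss - 1) with hδdef
  have hδpos : 0 < δ := mul_pos haj (by linarith)
  set x : Fin N → ℝ := Function.update a j (a j + δ) with hx
  have hxnn : ∀ k, 0 ≤ x k := by
    intro k
    by_cases hkj : k = j
    · subst hkj
      rw [hx, Function.update_self]
      have := han k
      linarith
    · rw [hx, Function.update_of_ne hkj]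
      exact han k
  have hxsum : Dt ≤ ∑ k, x k := by
    have h1 : ∑ k, x k = (∑ k, a k) + ((a j + δ) - a j) := by
      rw [hx]
      exact lem_sum_update (fun _ v => v) a j (a j + δ)
    rw [h1]
    linarith
  have hineq := hmin x hxnn hxsum
  have hsum1 : ∑ k, c k * x k
      = (∑ k, c k * a k) + (c j * (a j + δ) - c j * a j) := by
    rw [hx]
    exact lem_sum_update (fun k v => c k * v) a j (a j + δ)
  have hsum2 : ∑ k, β k * ((x k + e) * Real.log ((x k + e) / (b k + e)) - x k)
      = (∑ k, β k * ((a k + e) * Real.log ((a k + e) / (b k + e)) - a k))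
        + (β j * ((a j + δ + e) * Real.log ((a j + δ + e) / (b j + e)) - (a j + δ))
           - β j * ((a j + e) * Real.log ((a j + e) / (b j + e)) - a j)) := by
    rw [hx]
    exact lem_sum_update
      (fun k v => β k * ((v + e) * Real.log ((v + e) / (b k + e)) - v)) a j (a j + δ)
  rw [hsum1, hsum2] at hineq
  have harg : a j + δ + e = a j + e + δ := by ring
  rw [harg] at hineq
  have hH1 := lem_H1 (xe := a j + e) (b := b j + e) (δ := δ) haj hbj hδpos.le
  have hβη : 0 ≤ β j / η := div_nonneg (hβn j) hηpos.le
  have hA : 0 ≤ c j * δ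
      + β j / η * ((a j + e + δ) * Real.log ((a j + e + δ) / (b j + e))
          - (a j + e) * Real.log ((a j + e) / (b j + e)) - δ) := by
    have hηne : η ≠ 0 := ne_of_gt hηpos
    have hexpand : (1 / η) * (β j * ((a j + e + δ)
          * Real.log ((a j + e + δ) / (b j + e)) - (a j + δ))
        - β j * ((a j + e) * Real.log ((a j + e) / (b j + e)) - a j))
        = β j / η * ((a j + e + δ) * Real.log ((a j + e + δ) / (b j + e))
          - (a j + e) * Real.log ((a j + e) / (b j + e)) - δ) := by
      field_simp
      ring
    linarith [hineq, hexpand]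
  have hB := mul_le_mul_of_nonneg_left hH1 hβη
  have hxeδ : a j + e + δ = (a j + e) * Real.exp ss := by rw [hδdef]; ring
  have hlog : Real.log ((a j + e + δ) / (b j + e))
      = Real.log ((a j + e) / (b j + e)) + ss := by
    have hd : (a j + e + δ) / (b j + e)
        = ((a j + e) / (b j + e)) * Real.exp ss := by
      rw [hxeδ]; ring
    rw [hd, Real.log_mul (ne_of_gt (div_pos haj hbj)) (ne_of_gt (Real.exp_pos ss)),
      Real.log_exp]
  have hC : c j * δ + β j / η * (δ * (Real.log ((a j + e) / (b j + e)) + ss))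
      = δ * (G + β j / η * ss) := by
    rw [hGdef]
    ring
  have hssval : β j / η * ss ≤ -G / 2 := by
    have h1 : β j / η * ss = β j * (-G) / (2 * B0) := by
      rw [hssdef]
      field_simp
    have h2 : β j * (-G) ≤ B0 * (-G) := mul_le_mul_of_nonneg_right hβB (by linarith)
    rw [h1, div_le_div_iff₀ (by linarith) (by norm_num)]
    linarith [h2]
  have hD : δ * (G + β j / η * ss) ≤ δ * (G / 2) := by
    apply mul_le_mul_of_nonneg_left _ hδpos.le
    linarith
  have hE : δ * (G / 2) < 0 :=
    mul_neg_of_pos_of_neg hδpos (div_neg_of_neg_of_pos hneg two_pos)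
  rw [hlog] at hA hB
  linarith

theorem kkt_active {N : ℕ} (c b a β : Fin N → ℝ) (η e Dt : ℝ)
    (hηpos : 0 < η) (he : 0 < e) (hβn : ∀ i, 0 ≤ β i)
    (han : ∀ i, 0 ≤ a i) (hbn : ∀ i, 0 ≤ b i)
    (hfeas : Dt ≤ ∑ i, a i)
    (hmin : ∀ x : Fin N → ℝ, (∀ i, 0 ≤ x i) → Dt ≤ ∑ i, x i →
      (∑ i, c i * a i) + (1/η) * ∑ i, β i *
          ((a i + e) * Real.log ((a i + e) / (b i + e)) - a i)
      ≤ (∑ i, c i * x i) + (1/η) * ∑ i, β i *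
          ((x i + e) * Real.log ((x i + e) / (b i + e)) - x i))
    (i j : Fin N) (hi : 0 < a i) :
    c i + β i / η * Real.log ((a i + e) / (b i + e))
      ≤ c j + β j / η * Real.log ((a j + e) / (b j + e)) := by
  by_cases hij : i = j
  · subst hij; exact le_refl _
  by_contra hneg
  push_neg at hneg
  have hai : 0 < a i + e := by have := han i; linarith
  have haj : 0 < a j + e := by have := han j; linarith
  have hbi : 0 < b i + e := by have := hbn i; linarith
  have hbj : 0 < b j + e := by have := hbn j; linarith
  set Gi : ℝ := c i + β i / η * Real.log ((a i + e) / (b i + e)) with hGidef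
  set Gj : ℝ := c j + β j / η * Real.log ((a j + e) / (b j + e)) with hGjdef
  set γ : ℝ := (Gi - Gj) / 2 with hγdef
  have hγpos : 0 < γ := by rw [hγdef]; exact half_pos (sub_pos.mpr hneg)
  set B0 : ℝ := max (max (β i) (β j)) 1 with hB0def
  have hB0pos : (0:ℝ) < B0 := lt_of_lt_of_le one_pos (le_max_right _ _)
  have hβiB : β i ≤ B0 := le_trans (le_max_left _ _) (le_max_left _ _)
  have hβjB : β j ≤ B0 := le_trans (le_max_right _ _) (le_max_left _ _)
  set ss : ℝ := η * γ / (2 * B0) with hssdef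
  have hsspos : 0 < ss := by
    rw [hssdef]
    exact div_pos (mul_pos hηpos hγpos) (by linarith)
  have hexpm : Real.exp (-ss) < 1 := by
    rw [← Real.exp_zero]
    exact Real.exp_lt_exp.mpr (by linarith)
  have hexpp : 1 < Real.exp ss := by
    rw [← Real.exp_zero]
    exact Real.exp_lt_exp.mpr hsspos
  set δ : ℝ := min (a i)
    (min ((a i + e) * (1 - Real.exp (-ss))) ((a j + e) * (Real.exp ss - 1))) with hδdef
  have hδpos : 0 < δ :=
    lt_min hi (lt_min (mul_pos hai (by linarith)) (mul_pos haj (by linarith)))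
  have hδai : δ ≤ a i := min_le_left _ _
  have hδ1 : δ ≤ (a i + e) * (1 - Real.exp (-ss)) :=
    le_trans (min_le_right _ _) (min_le_left _ _)
  have hδ2 : δ ≤ (a j + e) * (Real.exp ss - 1) :=
    le_trans (min_le_right _ _) (min_le_right _ _)
  have hEm : (a i + e) * Real.exp (-ss) ≤ a i + e - δ := by linarith [hδ1]
  have hxdpos : 0 < a i + e - δ :=
    lt_of_lt_of_le (mul_pos hai (Real.exp_pos (-ss))) hEm
  have hEprod : Real.exp (-ss) * Real.exp ss = 1 := by
    rw [← Real.exp_add]; simp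
  have hlogi : Real.log ((a i + e) / (a i + e - δ)) ≤ ss := by
    rw [Real.log_le_iff_le_exp (by positivity), div_le_iff₀ hxdpos]
    have h9 := mul_le_mul_of_nonneg_right hEm (Real.exp_pos ss).le
    have h10 : (a i + e) * (Real.exp (-ss) * Real.exp ss) = a i + e := by
      rw [hEprod]; ring
    linarith [h9, h10]
  have hlogj : Real.log ((a j + e + δ) / (a j + e)) ≤ ss := by
    rw [Real.log_le_iff_le_exp (by positivity), div_le_iff₀ haj]
    linarith [hδ2]
  set x : Fin N → ℝ :=
    Function.update (Function.update a i (a i - δ)) j (a j + δ) with hx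
  have hxnn : ∀ k, 0 ≤ x k := by
    intro k
    by_cases hkj : k = j
    · subst hkj
      rw [hx, Function.update_self]
      have := han k
      linarith
    · rw [hx, Function.update_of_ne hkj]
      by_cases hki : k = i
      · subst hki
        rw [Function.update_self]
        linarith
      · rw [Function.update_of_ne hki]
        exact han k
  have hsumin : ∀ (G : Fin N → ℝ → ℝ),
      ∑ k, G k (x k) = (∑ k, G k (a k))
        + (G i (a i - δ) - G i (a i)) + (G j (a j + δ) - G j (a j)) := by
    intro G
    rw [hx, lem_sum_update G _ j (a j + δ), lem_sum_update G _ i (a i - δ)]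
    rw [Function.update_of_ne (Ne.symm hij)]
    try ring
  have hxsum : Dt ≤ ∑ k, x k := by
    have h1 := hsumin (fun _ v => v)
    rw [h1]
    linarith
  have hineq := hmin x hxnn hxsum
  have hsum1 := hsumin (fun k v => c k * v)
  have hsum2 := hsumin
    (fun k v => β k * ((v + e) * Real.log ((v + e) / (b k + e)) - v))
  rw [hsum1, hsum2] at hineq
  have hargi : a i - δ + e = a i + e - δ := by ring
  have hargj : a j + δ + e = a j + e + δ := by ring
  rw [hargi, hargj] at hineq
  have hH2 := lem_H2 (xe := a i + e) (b := b i + e) (δ := δ) hbi hδpos.le hxdpos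
  have hH1 := lem_H1 (xe := a j + e) (b := b j + e) (δ := δ) haj hbj hδpos.le
  have hβηi : 0 ≤ β i / η := div_nonneg (hβn i) hηpos.le
  have hβηj : 0 ≤ β j / η := div_nonneg (hβn j) hηpos.le
  have hA : 0 ≤ (c j * δ - c i * δ)
      + β i / η * ((a i + e - δ) * Real.log ((a i + e - δ) / (b i + e))
          - (a i + e) * Real.log ((a i + e) / (b i + e)) + δ)
      + β j / η * ((a j + e + δ) * Real.log ((a j + e + δ) / (b j + e))
          - (a j + e) * Real.log ((a j + e) / (b j + e)) - δ) := by
    have hηne : η ≠ 0 := ne_of_gt hηpos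
    have hexpand : (1 / η) * ((β i * ((a i + e - δ)
            * Real.log ((a i + e - δ) / (b i + e)) - (a i - δ))
          - β i * ((a i + e) * Real.log ((a i + e) / (b i + e)) - a i))
        + (β j * ((a j + e + δ)
            * Real.log ((a j + e + δ) / (b j + e)) - (a j + δ))
          - β j * ((a j + e) * Real.log ((a j + e) / (b j + e)) - a j)))
        = β i / η * ((a i + e - δ) * Real.log ((a i + e - δ) / (b i + e))
            - (a i + e) * Real.log ((a i + e) / (b i + e)) + δ)
          + β j / η * ((a j + e + δ) * Real.log ((a j + e + δ) / (b j + e))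
            - (a j + e) * Real.log ((a j + e) / (b j + e)) - δ) := by
      field_simp
      ring
    linarith [hineq, hexpand]
  have hBi := mul_le_mul_of_nonneg_left hH2 hβηi
  have hBj := mul_le_mul_of_nonneg_left hH1 hβηj
  have hspliti : Real.log ((a i + e - δ) / (b i + e))
      = Real.log ((a i + e) / (b i + e))
        - Real.log ((a i + e) / (a i + e - δ)) := by
    rw [eq_sub_iff_add_eq, ← Real.log_mul (by positivity) (by positivity)]
    congr 1
    field_simp
    try ring
  have hsplitj : Real.log ((a j + e + δ) / (b j + e))
      = Real.log ((a j + e) / (b j + e))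
        + Real.log ((a j + e + δ) / (a j + e)) := by
    rw [← Real.log_mul (by positivity) (by positivity)]
    congr 1
    field_simp
    try ring
  rw [hspliti] at hA hBi
  rw [hsplitj] at hA hBj
  have hssi : β i / η * ss ≤ γ / 2 := by
    have h1 : β i / η * ss = β i * γ / (2 * B0) := by
      rw [hssdef]; field_simp
    have h2 : β i * γ ≤ B0 * γ := mul_le_mul_of_nonneg_right hβiB hγpos.le
    rw [h1, div_le_div_iff₀ (by linarith) (by norm_num)]
    linarith [h2]
  have hssj : β j / η * ss ≤ γ / 2 := by
    have h1 : β j / η * ss = β j * γ / (2 * B0) := by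
      rw [hssdef]; field_simp
    have h2 : β j * γ ≤ B0 * γ := mul_le_mul_of_nonneg_right hβjB hγpos.le
    rw [h1, div_le_div_iff₀ (by linarith) (by norm_num)]
    linarith [h2]
  have hti : β i / η * (δ * Real.log ((a i + e) / (a i + e - δ)))
      ≤ β i / η * (δ * ss) := by
    apply mul_le_mul_of_nonneg_left _ hβηi
    exact mul_le_mul_of_nonneg_left hlogi hδpos.le
  have htj : β j / η * (δ * Real.log ((a j + e + δ) / (a j + e)))
      ≤ β j / η * (δ * ss) := by
    apply mul_le_mul_of_nonneg_left _ hβηj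
    exact mul_le_mul_of_nonneg_left hlogj hδpos.le
  have hssid : δ * (β i / η * ss) ≤ δ * (γ / 2) := mul_le_mul_of_nonneg_left hssi hδpos.le
  have hssjd : δ * (β j / η * ss) ≤ δ * (γ / 2) := mul_le_mul_of_nonneg_left hssj hδpos.le
  have hδγ : δ * γ
      = δ * (((c i + β i / η * Real.log ((a i + e) / (b i + e)))
        - (c j + β j / η * Real.log ((a j + e) / (b j + e)))) / 2) := by
    rw [hγdef, hGidef, hGjdef]
  have hδγpos : 0 < δ * γ := mul_pos hδpos hγpos
  linarith [hA, hBi, hBj, hti, htj, hssid, hssjd, hδγ, hδγpos]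

theorem lem_sub_le_mul_log {a b : ℝ} (ha : 0 < a) (hb : 0 < b) :
    a - b ≤ a * Real.log (a / b) := by
  have h := Real.log_le_sub_one_of_pos (x := b / a) (by positivity)
  have h2 : Real.log (a / b) = - Real.log (b / a) := by
    rw [← Real.log_inv]; congr 1; field_simp
  have h3 : a * Real.log (b / a) ≤ a * (b / a - 1) := mul_le_mul_of_nonneg_left h ha.le
  have h4 : a * (b / a - 1) = b - a := by field_simp
  rw [h2]; nlinarith

theorem lem_tel (f : ℕ → ℝ) (T : ℕ) :
    ∑ t ∈ Finset.Icc 1 T, (f t - f (t - 1)) = f T - f 0 := by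
  induction T with
  | zero => simp
  | succ n ih =>
      rw [Finset.sum_Icc_succ_top (Nat.le_add_left 1 n), ih]
      simp

/-- Theorem 3, case `1 ≤ K_s ≤ K_c`: the online regularization algorithm with
switching cost offset achieves competitive ratio `K_s·(1 + 2·ln(1 + N·D_max/D_min))`. -/
theorem regularization_offset_competitive_case1
    (N T : ℕ) (hN : 1 ≤ N) (hT : 1 ≤ T)
    (c : Fin N → ℕ → ℝ) (hc : ∀ i, ∀ t ∈ Finset.Icc 1 T, 0 < c i t)
    (β : Fin N → ℝ) (hβ : ∀ i, 0 ≤ β i)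
    (r : Fin N → ℕ → ℝ) (hr : ∀ i, ∀ t ∈ Finset.Icc 1 T, 0 < r i t)
    (D : ℕ → ℝ)
    (Dmin : ℝ) (hDmin : IsLeast {x | ∃ t ∈ Finset.Icc 1 T, D t = x} Dmin)
    (hDminpos : 0 < Dmin)
    (Dmax : ℝ) (hDmax : IsGreatest {x | ∃ t ∈ Finset.Icc 1 T, D t = x} Dmax)
    (βmax : ℝ) (hβmax : IsGreatest (Set.range β) βmax)
    (cmin : ℝ) (hcmin : IsLeast {x | ∃ i : Fin N, ∃ t ∈ Finset.Icc 1 T, c i t = x} cmin)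
    (rmin : ℝ) (hrmin : IsLeast {x | ∃ i : Fin N, ∃ t ∈ Finset.Icc 1 T, r i t = x} rmin)
    (rmax : ℝ) (hrmax : IsGreatest {x | ∃ i : Fin N, ∃ t ∈ Finset.Icc 1 T, r i t = x} rmax)
    -- K_s is well defined
    (hwell : (∑ i, β i) * rmax < cmin * Dmin)
    (ε : ℝ) (hε : ε = Dmin)
    (Kc : ℝ) (hKc : Kc = max (2 * (1 + ε / Dmin) * Dmax * βmax / (rmin * cmin)) 1)
    (Ks : ℝ) (hKs : Ks = 1 / (1 - (∑ i, β i) * rmax / (cmin * Dmin)))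
    -- case 1: 1 ≤ K_s ≤ K_c
    (hKs1 : 1 ≤ Ks) (hKsKc : Ks ≤ Kc)
    (η : ℝ) (hη : η = Real.log (1 + N * Dmax / ε))
    -- the online schedule s̃
    (st : Fin N → ℕ → ℝ)
    (hst0 : ∀ i, st i 0 = 0)
    (honline : ∀ t ∈ Finset.Icc 1 T,
      (∀ i, 0 ≤ st i t) ∧ D t ≤ ∑ i, st i t ∧
      ∀ x : Fin N → ℝ, (∀ i, 0 ≤ x i) → D t ≤ ∑ i, x i →
        (∑ i, c i t * st i t) +
            (1 / η) * ∑ i, β i *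
              ((st i t + ε / N) *
                  Real.log ((st i t + ε / N) / (st i (t - 1) + ε / N)) - st i t) ≤
          (∑ i, c i t * x i) +
            (1 / η) * ∑ i, β i *
              ((x i + ε / N) *
                  Real.log ((x i + ε / N) / (st i (t - 1) + ε / N)) - x i))
    -- the online schedule meets demand with equality
    (heq : ∀ t ∈ Finset.Icc 1 T, ∑ i, st i t = D t) :
    -- for every feasible schedule s
    ∀ s : Fin N → ℕ → ℝ,
      (∀ i, s i 0 = 0) →
      (∀ i, ∀ t ∈ Finset.Icc 1 T, 0 ≤ s i t) →
      (∀ t ∈ Finset.Icc 1 T, D t ≤ ∑ i, s i t) →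
      ∑ t ∈ Finset.Icc 1 T, ∑ i,
          (c i t * st i t + β i * max (st i t - st i (t - 1) - r i t) 0) ≤
        Ks * (1 + 2 * Real.log (1 + N * Dmax / Dmin)) *
          ∑ t ∈ Finset.Icc 1 T, ∑ i,
            (c i t * s i t + β i * max (s i t - s i (t - 1) - r i t) 0) := by
  intro s hs0 hsnn hsfeas
  subst hε
  rw [← hη]
  have hNR : (0:ℝ) < N := by exact_mod_cast Nat.lt_of_lt_of_le Nat.zero_lt_one hN
  set e : ℝ := ε / N with he_def
  have he : 0 < e := by rw [he_def]; positivity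
  have hDlo : ∀ t ∈ Finset.Icc 1 T, ε ≤ D t := fun t ht => hDmin.2 ⟨t, ht, rfl⟩
  have hDhi : ∀ t ∈ Finset.Icc 1 T, D t ≤ Dmax := fun t ht => hDmax.2 ⟨t, ht, rfl⟩
  have hDmM : ε ≤ Dmax := by
    obtain ⟨t0, ht0, hv⟩ := hDmin.1
    rw [← hv]; exact hDhi t0 ht0
  have hDmaxpos : 0 < Dmax := lt_of_lt_of_le hDminpos hDmM
  have hηpos : 0 < η := by
    rw [hη]; apply Real.log_pos
    have h1 : (1:ℝ) ≤ (N:ℝ) * Dmax / ε := by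
      rw [le_div_iff₀ hDminpos]
      nlinarith [hN, hDmM, (by exact_mod_cast hN : (1:ℝ) ≤ (N:ℝ))]
    linarith
  have hcminpos : 0 < cmin := by
    obtain ⟨i0, t0, ht0, hv⟩ := hcmin.1
    rw [← hv]; exact hc i0 t0 ht0
  have hrmaxpos : 0 < rmax := by
    obtain ⟨i0, t0, ht0, hv⟩ := hrmax.1
    rw [← hv]; exact hr i0 t0 ht0
  have hrle : ∀ i, ∀ t ∈ Finset.Icc 1 T, r i t ≤ rmax := fun i t ht => hrmax.2 ⟨i, t, ht, rfl⟩
  have hcle : ∀ i, ∀ t ∈ Finset.Icc 1 T, cmin ≤ c i t := fun i t ht => hcmin.2 ⟨i, t, ht, rfl⟩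
  have hβsum : 0 ≤ ∑ i, β i := Finset.sum_nonneg fun i _ => hβ i
  have hstnn : ∀ t, t ≤ T → ∀ i, 0 ≤ st i t := by
    intro t htT i
    rcases Nat.eq_zero_or_pos t with h0 | h1
    · rw [h0, hst0]
    · exact (honline t (Finset.mem_Icc.mpr ⟨h1, htT⟩)).1 i
  have hstle : ∀ t ∈ Finset.Icc 1 T, ∀ i, st i t ≤ D t := by
    intro t ht i
    rw [← heq t ht]
    exact Finset.single_le_sum (fun j _ => (honline t ht).1 j) (Finset.mem_univ i)
  have hstmax : ∀ t, t ≤ T → ∀ i, st i t ≤ Dmax := by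
    intro t htT i
    rcases Nat.eq_zero_or_pos t with h0 | h1
    · rw [h0, hst0]; exact hDmaxpos.le
    · exact (hstle t (Finset.mem_Icc.mpr ⟨h1, htT⟩) i).trans (hDhi t (Finset.mem_Icc.mpr ⟨h1, htT⟩))
  have hpos : ∀ t, t ≤ T → ∀ i, 0 < st i t + e := fun t htT i => by
    have := hstnn t htT i; linarith
  have hposb : ∀ t ∈ Finset.Icc 1 T, ∀ i, 0 < st i (t - 1) + e := by
    intro t ht i
    exact hpos (t-1) (le_trans (Nat.sub_le t 1) (Finset.mem_Icc.mp ht).2) i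
  haveI hNE : Nonempty (Fin N) := Fin.pos_iff_nonempty.mp (Nat.lt_of_lt_of_le Nat.zero_lt_one hN)
  set g : ℕ → Fin N → ℝ := fun t i =>
    c i t + β i / η * Real.log ((st i t + e) / (st i (t - 1) + e)) with hg
  set μ : ℕ → ℝ := fun t => Finset.inf' Finset.univ Finset.univ_nonempty (g t) with hμdef
  have hμle : ∀ t i, μ t ≤ g t i := fun t i => Finset.inf'_le (g t) (Finset.mem_univ i)
  -- the two KKT-style facts from per-step optimality
  have hgnn : ∀ t ∈ Finset.Icc 1 T, ∀ j, 0 ≤ g t j := by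
    intro t ht j
    obtain ⟨hann, hfeas, hmin⟩ := honline t ht
    have htT := (Finset.mem_Icc.mp ht).2
    rw [hg]
    exact kkt_nonneg (fun k => c k t) (fun k => st k (t - 1)) (fun k => st k t) β η e (D t)
      hηpos he hβ hann (fun k => hstnn (t - 1) (le_trans (Nat.sub_le t 1) htT) k)
      (le_of_eq (heq t ht).symm) (fun x hx hxs => hmin x hx hxs) j
  have hact : ∀ t ∈ Finset.Icc 1 T, ∀ i j, 0 < st i t → g t i ≤ g t j := by
    intro t ht i j hi
    obtain ⟨hann, hfeas, hmin⟩ := honline t ht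
    have htT := (Finset.mem_Icc.mp ht).2
    rw [hg]
    exact kkt_active (fun k => c k t) (fun k => st k (t - 1)) (fun k => st k t) β η e (D t)
      hηpos he hβ hann (fun k => hstnn (t - 1) (le_trans (Nat.sub_le t 1) htT) k)
      (le_of_eq (heq t ht).symm) (fun x hx hxs => hmin x hx hxs) i j hi
  have hμnn : ∀ t ∈ Finset.Icc 1 T, 0 ≤ μ t := fun t ht =>
    Finset.le_inf' _ _ fun j _ => hgnn t ht j
  have hμeq : ∀ t ∈ Finset.Icc 1 T, ∀ i, 0 < st i t → g t i = μ t := fun t ht i hi =>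
    le_antisymm (Finset.le_inf' _ _ fun j _ => hact t ht i j hi) (hμle t i)
  -- operational cost identity
  have hop : ∀ t ∈ Finset.Icc 1 T,
      ∑ i, c i t * st i t = μ t * D t -
        (1/η) * ∑ i, β i * (st i t * Real.log ((st i t + e) / (st i (t - 1) + e))) := by
    intro t ht
    have e1 : ∑ i, (c i t * st i t
          + 1/η * (β i * (st i t * Real.log ((st i t + e) / (st i (t - 1) + e)))))
        = ∑ i, g t i * st i t := by
      refine Finset.sum_congr rfl fun i _ => ?_
      rw [hg]
      have : η ≠ 0 := ne_of_gt hηpos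
      field_simp
    have e2 : ∑ i, g t i * st i t = μ t * D t := by
      have : ∀ i ∈ Finset.univ, g t i * st i t = μ t * st i t := by
        intro i _
        rcases eq_or_lt_of_le (hstnn t (Finset.mem_Icc.mp ht).2 i) with h0 | h0
        · rw [← h0]; ring
        · rw [hμeq t ht i h0]
      rw [Finset.sum_congr rfl this, ← Finset.mul_sum, heq t ht]
    have e3 : ∑ i, (c i t * st i t
          + 1/η * (β i * (st i t * Real.log ((st i t + e) / (st i (t - 1) + e)))))
        = (∑ i, c i t * st i t)
          + (1/η) * ∑ i, β i * (st i t * Real.log ((st i t + e) / (st i (t - 1) + e))) := by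
      rw [Finset.sum_add_distrib, Finset.mul_sum]
    rw [e3] at e1
    linarith [e1.trans e2]
  -- telescoping nonnegativity
  have htel : ∀ i, 0 ≤ ∑ t ∈ Finset.Icc 1 T,
      st i t * Real.log ((st i t + e) / (st i (t - 1) + e)) := by
    intro i
    have hp : ∀ t ∈ Finset.Icc 1 T, 0 < st i t + e :=
      fun t ht => hpos t (Finset.mem_Icc.mp ht).2 i
    have hpb : ∀ t ∈ Finset.Icc 1 T, 0 < st i (t - 1) + e := fun t ht => hposb t ht i
    have key : ∀ t ∈ Finset.Icc 1 T,
        st i t * Real.log ((st i t + e) / (st i (t - 1) + e))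
        = (st i t + e) * Real.log ((st i t + e) / (st i (t - 1) + e))
          - e * (Real.log (st i t + e) - Real.log (st i (t - 1) + e)) := by
      intro t ht
      rw [Real.log_div (ne_of_gt (hp t ht)) (ne_of_gt (hpb t ht))]
      ring
    rw [Finset.sum_congr rfl key, Finset.sum_sub_distrib]
    have h1 : ∑ t ∈ Finset.Icc 1 T, ((st i t + e) - (st i (t - 1) + e))
        ≤ ∑ t ∈ Finset.Icc 1 T, (st i t + e) * Real.log ((st i t + e) / (st i (t - 1) + e)) :=
      Finset.sum_le_sum (fun t ht => lem_sub_le_mul_log (hp t ht) (hpb t ht))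
    have h2 := lem_tel (fun τ => st i τ + e) T
    simp only [hst0] at h2
    have h3 := lem_tel (fun τ => Real.log (st i τ + e)) T
    simp only [hst0] at h3
    have h3' : ∑ t ∈ Finset.Icc 1 T, e * (Real.log (st i t + e) - Real.log (st i (t - 1) + e))
        = e * (Real.log (st i T + e) - Real.log (0 + e)) := by
      rw [← Finset.mul_sum, h3]
    have h4 : e * (Real.log (st i T + e) - Real.log (0 + e)) ≤ st i T := by
      have hd : Real.log (st i T + e) - Real.log (0 + e)
          = Real.log ((st i T + e) / e) := by
        rw [Real.log_div (ne_of_gt (hpos T le_rfl i)) (ne_of_gt he)]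
        rw [zero_add]
      rw [hd]
      have h5 := Real.log_le_sub_one_of_pos (x := (st i T + e) / e) (div_pos (hpos T le_rfl i) he)
      have h6 : e * ((st i T + e) / e - 1) = st i T := by field_simp; ring
      calc e * Real.log ((st i T + e) / e) ≤ e * ((st i T + e) / e - 1) :=
            mul_le_mul_of_nonneg_left h5 he.le
        _ = st i T := h6
    rw [h3']
    linarith
  -- switching cost bound
  have hsw : ∀ t ∈ Finset.Icc 1 T,
      ∑ i, β i * max (st i t - st i (t - 1) - r i t) 0 ≤ η * μ t * (D t + ε) := by
    intro t ht
    have htT := (Finset.mem_Icc.mp ht).2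
    have hper : ∀ i ∈ Finset.univ, β i * max (st i t - st i (t - 1) - r i t) 0
        ≤ η * μ t * (st i t + e) := by
      intro i _
      have hai := hpos t htT i
      have hbi := hposb t ht i
      rcases le_or_gt (st i t - st i (t - 1) - r i t) 0 with h0 | h0
      · rw [max_eq_right h0, mul_zero]
        have := hμnn t ht
        positivity
      · rw [max_eq_left h0.le]
        have hbnn : 0 ≤ st i (t - 1) :=
          hstnn (t - 1) (le_trans (Nat.sub_le t 1) htT) i
        have hipos : 0 < st i t := by have := hr i t ht; linarith
        have hgi := hμeq t ht i hipos
        rw [hg] at hgi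
        simp only at hgi
        have hβL : β i * Real.log ((st i t + e) / (st i (t - 1) + e))
            = η * (μ t - c i t) := by
          have hηne : η ≠ 0 := ne_of_gt hηpos
          field_simp at hgi
          nlinarith [hgi]
        have key : st i t - st i (t - 1)
            ≤ (st i t + e) * Real.log ((st i t + e) / (st i (t - 1) + e)) := by
          have := lem_sub_le_mul_log hai hbi
          linarith
        have hc1 := hc i t ht
        calc β i * (st i t - st i (t - 1) - r i t)
            ≤ β i * (st i t - st i (t - 1)) := by
              have := hr i t ht
              have := hβ i
              nlinarith
          _ ≤ β i * ((st i t + e) * Real.log ((st i t + e) / (st i (t - 1) + e))) :=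
              mul_le_mul_of_nonneg_left key (hβ i)
          _ = (st i t + e) * (β i * Real.log ((st i t + e) / (st i (t - 1) + e))) := by ring
          _ = (st i t + e) * (η * (μ t - c i t)) := by rw [hβL]
          _ ≤ (st i t + e) * (η * μ t) := by
              have h9 : 0 ≤ (st i t + e) * (η * c i t) := by positivity
              nlinarith [h9]
          _ = η * μ t * (st i t + e) := by ring
    calc ∑ i, β i * max (st i t - st i (t - 1) - r i t) 0
        ≤ ∑ i, η * μ t * (st i t + e) := Finset.sum_le_sum hper
      _ = η * μ t * (D t + ε) := by
          rw [← Finset.mul_sum]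
          congr 1
          rw [Finset.sum_add_distrib, heq t ht, Finset.sum_const, Finset.card_univ,
            Fintype.card_fin, nsmul_eq_mul, he_def]
          field_simp
  -- weak duality step 1
  have hdual1 : ∀ t ∈ Finset.Icc 1 T, μ t * D t ≤ (∑ i, c i t * s i t)
      + ∑ i, β i / η * Real.log ((st i t + e) / (st i (t - 1) + e)) * s i t := by
    intro t ht
    have h1 : μ t * D t ≤ μ t * ∑ i, s i t :=
      mul_le_mul_of_nonneg_left (hsfeas t ht) (hμnn t ht)
    have h2 : μ t * ∑ i, s i t = ∑ i, μ t * s i t := Finset.mul_sum _ _ _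
    have h3 : ∑ i, μ t * s i t ≤ ∑ i, g t i * s i t :=
      Finset.sum_le_sum fun i _ => mul_le_mul_of_nonneg_right (hμle t i) (hsnn i t ht)
    have h4 : ∑ i, g t i * s i t = (∑ i, c i t * s i t)
        + ∑ i, β i / η * Real.log ((st i t + e) / (st i (t - 1) + e)) * s i t := by
      rw [← Finset.sum_add_distrib]
      refine Finset.sum_congr rfl fun i _ => ?_
      rw [hg]
      ring
    linarith
  -- weak duality step 2 (Abel summation with dual weights)
  have hdual2 : ∀ i, ∑ t ∈ Finset.Icc 1 T,
        β i / η * Real.log ((st i t + e) / (st i (t - 1) + e)) * s i t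
      ≤ (∑ t ∈ Finset.Icc 1 T, β i * max (s i t - s i (t - 1) - r i t) 0)
        + (T : ℝ) * (β i * rmax) := by
    intro i
    set w : ℕ → ℝ := fun τ => β i / η * Real.log ((Dmax + e) / (st i (τ - 1) + e)) with hw
    have hwnn : ∀ τ, τ - 1 ≤ T → 0 ≤ w τ := by
      intro τ hτ
      simp only [hw]
      apply mul_nonneg (div_nonneg (hβ i) hηpos.le)
      apply Real.log_nonneg
      rw [one_le_div (hpos (τ - 1) hτ i)]
      have := hstmax (τ - 1) hτ i
      linarith
    have hwβ : ∀ τ, τ - 1 ≤ T → w τ ≤ β i := by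
      intro τ hτ
      simp only [hw]
      have hlog : Real.log ((Dmax + e) / (st i (τ - 1) + e)) ≤ η := by
        have hb := hpos (τ - 1) hτ i
        have hnn := hstnn (τ - 1) hτ i
        have h1 : (Dmax + e) / (st i (τ - 1) + e) ≤ (Dmax + e) / e := by
          gcongr <;> linarith
        have h2 : (Dmax + e) / e = 1 + N * Dmax / ε := by
          rw [he_def]
          field_simp
          ring
        calc Real.log ((Dmax + e) / (st i (τ - 1) + e)) ≤ Real.log ((Dmax + e) / e) :=
              Real.log_le_log (by positivity) h1
          _ = η := by rw [h2, ← hη]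
      calc β i / η * Real.log ((Dmax + e) / (st i (τ - 1) + e)) ≤ β i / η * η :=
            mul_le_mul_of_nonneg_left hlog (div_nonneg (hβ i) hηpos.le)
        _ = β i := by field_simp
    have hid : ∀ t ∈ Finset.Icc 1 T,
        β i / η * Real.log ((st i t + e) / (st i (t - 1) + e)) * s i t
        = (w t - w (t + 1)) * s i t := by
      intro t ht
      have htT := (Finset.mem_Icc.mp ht).2
      congr 1
      simp only [hw, Nat.add_sub_cancel]
      have p1 : st i t + e ≠ 0 := ne_of_gt (hpos t htT i)
      have p2 : st i (t - 1) + e ≠ 0 := ne_of_gt (hposb t ht i)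
      have p3 : Dmax + e ≠ 0 := by positivity
      rw [Real.log_div p1 p2, Real.log_div p3 p2, Real.log_div p3 p1]
      ring
    have hsnn' : ∀ t, t ≤ T → 0 ≤ s i t := by
      intro t htT
      rcases Nat.eq_zero_or_pos t with h0 | h1
      · rw [h0, hs0]
      · exact hsnn i t (Finset.mem_Icc.mpr ⟨h1, htT⟩)
    calc ∑ t ∈ Finset.Icc 1 T,
          β i / η * Real.log ((st i t + e) / (st i (t - 1) + e)) * s i t
        = ∑ t ∈ Finset.Icc 1 T, (w t - w (t + 1)) * s i t :=
          Finset.sum_congr rfl hid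
      _ = (∑ t ∈ Finset.Icc 1 T, w t * (s i t - s i (t - 1)))
          + ∑ t ∈ Finset.Icc 1 T,
              ((fun τ => -(w (τ + 1) * s i τ)) t - (fun τ => -(w (τ + 1) * s i τ)) (t - 1)) := by
          rw [← Finset.sum_add_distrib]
          refine Finset.sum_congr rfl fun t ht => ?_
          have h1t := (Finset.mem_Icc.mp ht).1
          simp only
          rw [Nat.sub_add_cancel h1t]
          ring
      _ ≤ (∑ t ∈ Finset.Icc 1 T, (β i * max (s i t - s i (t - 1) - r i t) 0 + β i * rmax))
          + 0 := by
          apply add_le_add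
          · refine Finset.sum_le_sum fun t ht => ?_
            have h1t := (Finset.mem_Icc.mp ht).1
            have htT := (Finset.mem_Icc.mp ht).2
            have hτ : t - 1 ≤ T := le_trans (Nat.sub_le t 1) htT
            have hwt0 := hwnn t hτ
            have hwtβ := hwβ t hτ
            have hrt := hr i t ht
            have hrt2 := hrle i t ht
            rcases le_or_gt (s i t - s i (t - 1)) 0 with hd | hd
            · have hL : w t * (s i t - s i (t - 1)) ≤ 0 := mul_nonpos_of_nonneg_of_nonpos hwt0 hd
              have hR : 0 ≤ β i * max (s i t - s i (t - 1) - r i t) 0 + β i * rmax := by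
                have := hβ i
                have := le_max_right (s i t - s i (t - 1) - r i t) (0:ℝ)
                nlinarith
              linarith
            · have hL : w t * (s i t - s i (t - 1)) ≤ β i * (s i t - s i (t - 1)) :=
                mul_le_mul_of_nonneg_right hwtβ hd.le
              have hdle : s i t - s i (t - 1) ≤ max (s i t - s i (t - 1) - r i t) 0 + rmax := by
                rcases le_total (s i t - s i (t - 1) - r i t) 0 with h5 | h5
                · rw [max_eq_right h5]; linarith
                · rw [max_eq_left h5]; linarith
              have := mul_le_mul_of_nonneg_left hdle (hβ i)
              nlinarith
          · rw [lem_tel (fun τ => -(w (τ + 1) * s i τ)) T]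
            simp only [hs0, mul_zero, neg_zero, sub_zero]
            have h6 : 0 ≤ w (T + 1) := hwnn (T + 1) (by simp)
            have h7 : 0 ≤ s i T := hsnn' T le_rfl
            nlinarith
      _ = (∑ t ∈ Finset.Icc 1 T, β i * max (s i t - s i (t - 1) - r i t) 0)
          + (T : ℝ) * (β i * rmax) := by
          rw [add_zero, Finset.sum_add_distrib, Finset.sum_const, Nat.card_Icc]
          simp [nsmul_eq_mul]
  -- assembly
  set P := ∑ t ∈ Finset.Icc 1 T, ∑ i, c i t * s i t with hP
  set M := ∑ t ∈ Finset.Icc 1 T, ∑ i, β i * max (s i t - s i (t - 1) - r i t) 0 with hM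
  set Q := ∑ t ∈ Finset.Icc 1 T, μ t * D t with hQ
  have hOp : ∑ t ∈ Finset.Icc 1 T, ∑ i, c i t * st i t ≤ Q := by
    have h1 : ∑ t ∈ Finset.Icc 1 T, ∑ i, c i t * st i t
        = Q - (1/η) * ∑ t ∈ Finset.Icc 1 T, ∑ i,
            β i * (st i t * Real.log ((st i t + e) / (st i (t - 1) + e))) := by
      rw [Finset.sum_congr rfl hop, Finset.sum_sub_distrib, ← Finset.mul_sum]
    rw [h1]
    have h2 : 0 ≤ ∑ t ∈ Finset.Icc 1 T, ∑ i,
        β i * (st i t * Real.log ((st i t + e) / (st i (t - 1) + e))) := by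
      rw [Finset.sum_comm]
      apply Finset.sum_nonneg
      intro i _
      rw [← Finset.mul_sum]
      exact mul_nonneg (hβ i) (htel i)
    have h3 : 0 ≤ (1/η) * ∑ t ∈ Finset.Icc 1 T, ∑ i,
        β i * (st i t * Real.log ((st i t + e) / (st i (t - 1) + e))) :=
      mul_nonneg (by positivity) h2
    linarith
  have hSw : ∑ t ∈ Finset.Icc 1 T, ∑ i, β i * max (st i t - st i (t - 1) - r i t) 0
      ≤ 2 * η * Q := by
    calc ∑ t ∈ Finset.Icc 1 T, ∑ i, β i * max (st i t - st i (t - 1) - r i t) 0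
        ≤ ∑ t ∈ Finset.Icc 1 T, η * μ t * (D t + ε) := Finset.sum_le_sum hsw
      _ ≤ ∑ t ∈ Finset.Icc 1 T, 2 * η * (μ t * D t) := by
          refine Finset.sum_le_sum fun t ht => ?_
          have h1 := hDlo t ht
          have h2 := hμnn t ht
          have h3 : 0 ≤ η * μ t * (D t - ε) :=
            mul_nonneg (mul_nonneg hηpos.le h2) (by linarith)
          nlinarith [h3]
      _ = 2 * η * Q := by rw [hQ, Finset.mul_sum]
  have hQle : Q ≤ P + M + (T : ℝ) * ((∑ i, β i) * rmax) := by
    have h1 : Q ≤ P + ∑ t ∈ Finset.Icc 1 T, ∑ i,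
        β i / η * Real.log ((st i t + e) / (st i (t - 1) + e)) * s i t := by
      calc Q ≤ ∑ t ∈ Finset.Icc 1 T, ((∑ i, c i t * s i t)
            + ∑ i, β i / η * Real.log ((st i t + e) / (st i (t - 1) + e)) * s i t) :=
            Finset.sum_le_sum hdual1
        _ = P + ∑ t ∈ Finset.Icc 1 T, ∑ i,
            β i / η * Real.log ((st i t + e) / (st i (t - 1) + e)) * s i t := by
            rw [Finset.sum_add_distrib]
    have h2 : ∑ t ∈ Finset.Icc 1 T, ∑ i,
        β i / η * Real.log ((st i t + e) / (st i (t - 1) + e)) * s i t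
        ≤ M + (T : ℝ) * ((∑ i, β i) * rmax) := by
      rw [Finset.sum_comm]
      calc ∑ i, ∑ t ∈ Finset.Icc 1 T,
            β i / η * Real.log ((st i t + e) / (st i (t - 1) + e)) * s i t
          ≤ ∑ i, ((∑ t ∈ Finset.Icc 1 T, β i * max (s i t - s i (t - 1) - r i t) 0)
              + (T : ℝ) * (β i * rmax)) := Finset.sum_le_sum fun i _ => hdual2 i
        _ = (∑ i, ∑ t ∈ Finset.Icc 1 T, β i * max (s i t - s i (t - 1) - r i t) 0)
            + (T : ℝ) * ((∑ i, β i) * rmax) := by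
            rw [Finset.sum_add_distrib]
            congr 1
            rw [← Finset.mul_sum, ← Finset.sum_mul]
        _ = M + (T : ℝ) * ((∑ i, β i) * rmax) := by rw [hM, Finset.sum_comm]
    linarith
  have hLHS : ∑ t ∈ Finset.Icc 1 T, ∑ i,
      (c i t * st i t + β i * max (st i t - st i (t - 1) - r i t) 0)
      = (∑ t ∈ Finset.Icc 1 T, ∑ i, c i t * st i t)
        + ∑ t ∈ Finset.Icc 1 T, ∑ i, β i * max (st i t - st i (t - 1) - r i t) 0 := by
    rw [← Finset.sum_add_distrib]
    exact Finset.sum_congr rfl fun t _ => Finset.sum_add_distrib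
  have hRHS : ∑ t ∈ Finset.Icc 1 T, ∑ i,
      (c i t * s i t + β i * max (s i t - s i (t - 1) - r i t) 0) = P + M := by
    rw [hP, hM, ← Finset.sum_add_distrib]
    exact Finset.sum_congr rfl fun t _ => Finset.sum_add_distrib
  have hPlo : (T : ℝ) * (cmin * ε) ≤ P := by
    have h1 : ∑ t ∈ Finset.Icc 1 T, (cmin * ε) ≤ P := by
      rw [hP]
      refine Finset.sum_le_sum fun t ht => ?_
      calc cmin * ε ≤ cmin * D t := mul_le_mul_of_nonneg_left (hDlo t ht) hcminpos.le
        _ ≤ cmin * ∑ i, s i t := mul_le_mul_of_nonneg_left (hsfeas t ht) hcminpos.le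
        _ = ∑ i, cmin * s i t := Finset.mul_sum _ _ _
        _ ≤ ∑ i, c i t * s i t :=
            Finset.sum_le_sum fun i _ =>
              mul_le_mul_of_nonneg_right (hcle i t ht) (hsnn i t ht)
    rw [Finset.sum_const, Nat.card_Icc] at h1
    simpa [nsmul_eq_mul] using h1
  have hMnn : 0 ≤ M := by
    rw [hM]
    refine Finset.sum_nonneg fun t _ => Finset.sum_nonneg fun i _ => ?_
    exact mul_nonneg (hβ i) (le_max_right _ 0)
  have hfac : (0:ℝ) < 1 + 2 * η := by linarith
  have hkey : P + M + (T : ℝ) * ((∑ i, β i) * rmax) ≤ Ks * (P + M) := by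
    set q := (∑ i, β i) * rmax with hqdef
    have hqnn : 0 ≤ q := mul_nonneg hβsum hrmaxpos.le
    have hC : 0 < cmin * ε := mul_pos hcminpos hDminpos
    have hG : 0 < cmin * ε - q := by rw [hqdef]; linarith [hwell]
    have hKs' : Ks = (cmin * ε) / (cmin * ε - q) := by
      rw [hKs,
        show (1 : ℝ) - q / (cmin * ε) = (cmin * ε - q) / (cmin * ε) by field_simp,
        one_div_div]
    rw [hKs', div_mul_eq_mul_div, le_div_iff₀ hG]
    have hTq : (T : ℝ) * q * (cmin * ε) ≤ q * P := by
      have h8 := mul_le_mul_of_nonneg_left hPlo hqnn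
      nlinarith
    nlinarith [mul_nonneg hqnn hMnn,
      mul_nonneg (mul_nonneg (Nat.cast_nonneg (α := ℝ) T) hqnn) hqnn]
  calc ∑ t ∈ Finset.Icc 1 T, ∑ i,
        (c i t * st i t + β i * max (st i t - st i (t - 1) - r i t) 0)
      = (∑ t ∈ Finset.Icc 1 T, ∑ i, c i t * st i t)
        + ∑ t ∈ Finset.Icc 1 T, ∑ i, β i * max (st i t - st i (t - 1) - r i t) 0 := hLHS
    _ ≤ Q + 2 * η * Q := add_le_add hOp hSw
    _ = (1 + 2 * η) * Q := by ring
    _ ≤ (1 + 2 * η) * (P + M + (T : ℝ) * ((∑ i, β i) * rmax)) :=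
        mul_le_mul_of_nonneg_left hQle hfac.le
    _ ≤ (1 + 2 * η) * (Ks * (P + M)) := mul_le_mul_of_nonneg_left hkey hfac.le
    _ = Ks * (1 + 2 * η) * (P + M) := by ring
    _ = Ks * (1 + 2 * η) * ∑ t ∈ Finset.Icc 1 T, ∑ i,
        (c i t * s i t + β i * max (s i t - s i (t - 1) - r i t) 0) := by rw [hRHS]
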